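/- If Y(t) ∈ K for all t ≥ 0 solves the variational inequality ⟨Ỹ − Y(t), ∂_t Y(t) + f'(v)·∇_x Y(t)⟩ ≥ 0 for all Ỹ ∈ K (in the distributional sense in t), then t ↦ ‖Y(t)‖² is constant in t; i.e., ∬ Y²(t,x,v) dx dv = ∬ Y²(0,x,v) dx dv for a.e. t > 0. -/

import Mathlib

open MeasureTheory
open scoped RealInnerProductSpace

lemma setIntegral_prod_symm' {α β E : Type*} [MeasurableSpace α] [MeasurableSpace β]
    [NormedAddCommGroup E] [NormedSpace ℝ E]
    {μ : Measure α} {ν : Measure β} [SigmaFinite ν] [SigmaFinite μ]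
    (f : α × β → E) {s : Set α} {t : Set β}
    (hf : IntegrableOn f (s ×ˢ t) (μ.prod ν)) :
    ∫ z in s ×ˢ t, f z ∂(μ.prod ν) = ∫ y in t, ∫ x in s, f (x, y) ∂μ ∂ν := by
  rw [← Measure.prod_restrict s t]
  rw [IntegrableOn, ← Measure.prod_restrict s t] at hf
  exact integral_prod_symm f hf

noncomputable def ePl (m : ℕ) : (Fin (m+1) → ℝ) ≃L[ℝ] EuclideanSpace ℝ (Fin (m+1)) :=
  (PiLp.continuousLinearEquiv 2 ℝ (fun _ : Fin (m+1) => ℝ)).symm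

lemma box_integral_grad_zero {n : ℕ} {L : ℝ} (hL : 0 < L)
    (c : EuclideanSpace ℝ (Fin n))
    (u : EuclideanSpace ℝ (Fin n) → ℝ) (g : EuclideanSpace ℝ (Fin n) → EuclideanSpace ℝ (Fin n))
    (huc : Continuous u) (hgc : Continuous g)
    (hdu : ∀ x, HasGradientAt u (g x) x)
    (hper : ∀ (i : Fin n) x, u (x + (2*L) • EuclideanSpace.single i (1:ℝ)) = u x) :
    ∫ x in {x : EuclideanSpace ℝ (Fin n) | ∀ i, x i ∈ Set.Icc (-L) L}, u x * ⟪c, g x⟫ = 0 := by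
  cases n with
  | zero =>
      have hc : c = 0 := Subsingleton.elim _ _
      simp [hc]
  | succ m =>
      have hle : (fun _ : Fin (m+1) => -L) ≤ (fun _ : Fin (m+1) => L) := fun i => by
        simp; linarith
      set f : Fin (m+1) → (Fin (m+1) → ℝ) → ℝ :=
        fun i x => (c i / 2) * (u (ePl m x) * u (ePl m x)) with hfdef
      set f' : Fin (m+1) → (Fin (m+1) → ℝ) → (Fin (m+1) → ℝ) →L[ℝ] ℝ := fun i x =>
        (c i * u (ePl m x)) •
          (((InnerProductSpace.toDual ℝ (EuclideanSpace ℝ (Fin (m+1))) (g (ePl m x))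
            : EuclideanSpace ℝ (Fin (m+1)) →L[ℝ] ℝ)).comp
          ((ePl m : (Fin (m+1) → ℝ) →L[ℝ] EuclideanSpace ℝ (Fin (m+1))))) with hf'def
      have hu' : ∀ x, HasFDerivAt (fun y : Fin (m+1) → ℝ => u (ePl m y))
          (((InnerProductSpace.toDual ℝ (EuclideanSpace ℝ (Fin (m+1))) (g (ePl m x))
            : EuclideanSpace ℝ (Fin (m+1)) →L[ℝ] ℝ)).comp
          ((ePl m : (Fin (m+1) → ℝ) →L[ℝ] EuclideanSpace ℝ (Fin (m+1))))) x :=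
        fun x => ((hdu _).hasFDerivAt).comp x ((ePl m).toContinuousLinearMap.hasFDerivAt)
      have hd : ∀ (x : Fin (m+1) → ℝ) (i : Fin (m+1)), HasFDerivAt (f i) (f' i x) x := by
        intro x i
        have h1 := ((hu' x).mul (hu' x)).const_mul (c i / 2)
        refine HasFDerivAt.congr_fderiv h1 ?_
        ext y
        simp [hf'def]
        ring
      -- divergence identity
      have hdiv := MeasureTheory.integral_divergence_of_hasFDerivAt_off_countable'
        (fun _ => -L) (fun _ => L) hle f f' ∅ Set.countable_empty
        (fun i => Continuous.continuousOn (by fun_prop))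
        (fun x _ i => hd x i)
        (by
          refine ContinuousOn.integrableOn_compact isCompact_Icc (Continuous.continuousOn ?_)
          apply continuous_finset_sum
          intro i _
          simp only [hf'def, ContinuousLinearMap.smul_apply, ContinuousLinearMap.comp_apply,
            smul_eq_mul, InnerProductSpace.toDual_apply_apply]
          exact (continuous_const.mul (huc.comp (ePl m).continuous)).mul
            (Continuous.inner (hgc.comp (ePl m).continuous) continuous_const))
      -- front face and back face integrands agree by periodicity
      have key : ∀ (i : Fin (m+1)) (r s : ℝ) (y : Fin m → ℝ),
          (Fin.insertNth i r y : Fin (m+1) → ℝ) + s • (Pi.single i (1:ℝ) : Fin (m+1) → ℝ) = Fin.insertNth i (r+s) y := by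
        intro i r s y; funext j
        refine Fin.succAboveCases i ?_ ?_ j
        · simp
        · intro k
          simp [Fin.insertNth_apply_succAbove, Pi.single_eq_of_ne (Fin.succAbove_ne i k)]
      have hfront : ∀ (i : Fin (m+1)) (y : Fin m → ℝ),
          u (ePl m (i.insertNth L y)) = u (ePl m (i.insertNth (-L) y)) := by
        intro i y
        have h1 : (Fin.insertNth i L y : Fin (m+1) → ℝ) = Fin.insertNth i (-L) y + (2*L) • (Pi.single i (1:ℝ) : Fin (m+1) → ℝ) := by
          rw [key i (-L) (2*L) y, show -L + 2*L = L by ring]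
        have h2 : ePl m (Pi.single i (1:ℝ)) = EuclideanSpace.single i (1:ℝ) := rfl
        have h1E : ePl m (Fin.insertNth i L y) =
            ePl m (Fin.insertNth i (-L) y) + (2*L) • EuclideanSpace.single i (1:ℝ) := by
          rw [h1, map_add, _root_.map_smul, h2]
        rw [h1E, hper]
      rw [Finset.sum_eq_zero (fun i _ => sub_eq_zero_of_eq (integral_congr_ae
        (Filter.Eventually.of_forall (fun y => by simp only [hfdef, hfront i y]))))] at hdiv
      -- identify the divergence integrand
      have hintg : ∀ x : Fin (m+1) → ℝ, (∑ i, f' i x (Pi.single i 1)) =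
          u (ePl m x) * ⟪c, g (ePl m x)⟫ := by
        intro x
        have : ∀ i : Fin (m+1), ((ePl m : (Fin (m+1) → ℝ) →L[ℝ] EuclideanSpace ℝ (Fin (m+1))))
            (Pi.single i 1) = EuclideanSpace.single i (1:ℝ) := fun i => rfl
        simp only [hf'def, ContinuousLinearMap.smul_apply, ContinuousLinearMap.comp_apply,
          smul_eq_mul, InnerProductSpace.toDual_apply_apply, this, EuclideanSpace.inner_single_right,
          PiLp.inner_apply, RCLike.inner_apply, conj_trivial, map_one, one_mul,
          EuclideanSpace.single_apply, mul_ite, ite_mul, zero_mul, mul_one, mul_zero, Finset.sum_ite_eq',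
          Finset.mem_univ, if_true]
        rw [Finset.mul_sum]
        exact Finset.sum_congr rfl fun i _ => by ring
      rw [MeasureTheory.integral_congr_ae (Filter.Eventually.of_forall
        (fun x => hintg x))] at hdiv
      -- transfer from pi space to Euclidean space
      have hpre : ((MeasurableEquiv.toLp 2 (Fin (m+1) → ℝ)).symm) ⁻¹'
          (Set.Icc (fun _ : Fin (m+1) => -L) (fun _ => L)) =
          {x : EuclideanSpace ℝ (Fin (m+1)) | ∀ i, x i ∈ Set.Icc (-L) L} := by
        ext x
        simp [Set.mem_Icc, Pi.le_def, MeasurableEquiv.coe_toLp_symm,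
          forall_and, Set.mem_setOf_eq]
      have htrans := (EuclideanSpace.volume_preserving_symm_measurableEquiv_toLp
        (Fin (m+1))).setIntegral_preimage_emb
        ((MeasurableEquiv.toLp 2 (Fin (m+1) → ℝ)).symm).measurableEmbedding
        (fun y => u (ePl m y) * ⟪c, g (ePl m y)⟫)
        (Set.Icc (fun _ : Fin (m+1) => -L) (fun _ => L))
      rw [hpre] at htrans
      have hid : ∀ x : EuclideanSpace ℝ (Fin (m+1)),
          ePl m (((MeasurableEquiv.toLp 2 (Fin (m+1) → ℝ)).symm) x) = x := fun x => rfl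
      simp only [hid] at htrans
      rw [htrans.symm] at hdiv
      exact hdiv

/-- If `Y(t) ∈ K` (non-decreasing in `v`, `2L`-periodic in `x`) solves the
variational inequality `⟨Ỹ - Y(t), ∂ₜY(t) + f'(v)·∇ₓY(t)⟩ ≥ 0` for all `Ỹ ∈ K`, then the
`L²` norm is conserved: `∬ Y²(t,x,v) dx dv = ∬ Y²(0,x,v) dx dv` for all `t ≥ 0`
(take `Ỹ = 0` and `Ỹ = 2Y(t)` and use `⟨Y, f'·∇ₓY⟩ = 0` by periodicity). -/
theorem variational_solution_conserves_L2
    (n : ℕ) (L : ℝ) (hL : 0 < L)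
    (f' : ℝ → EuclideanSpace ℝ (Fin n)) (hf' : Continuous f')
    (S : Set (EuclideanSpace ℝ (Fin n) × ℝ))
    (hS : S = ({x : EuclideanSpace ℝ (Fin n) | ∀ i, x i ∈ Set.Icc (-L) L} : Set _) ×ˢ
      Set.Icc (0 : ℝ) 1)
    (Y Yt : ℝ → EuclideanSpace ℝ (Fin n) → ℝ → ℝ)
    (Yx : ℝ → EuclideanSpace ℝ (Fin n) → ℝ → EuclideanSpace ℝ (Fin n))
    (hYc : Continuous fun q : ℝ × EuclideanSpace ℝ (Fin n) × ℝ => Y q.1 q.2.1 q.2.2)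
    (hYtc : Continuous fun q : ℝ × EuclideanSpace ℝ (Fin n) × ℝ => Yt q.1 q.2.1 q.2.2)
    (hYxc : Continuous fun q : ℝ × EuclideanSpace ℝ (Fin n) × ℝ => Yx q.1 q.2.1 q.2.2)
    (hdt : ∀ (t : ℝ) (x : EuclideanSpace ℝ (Fin n)) (v : ℝ),
      HasDerivAt (fun s => Y s x v) (Yt t x v) t)
    (hdx : ∀ (t : ℝ) (x : EuclideanSpace ℝ (Fin n)) (v : ℝ),
      HasGradientAt (fun x => Y t x v) (Yx t x v) x)
    (hper : ∀ (t : ℝ) (i : Fin n) (x : EuclideanSpace ℝ (Fin n)) (v : ℝ),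
      Y t (x + (2 * L) • EuclideanSpace.single i 1) v = Y t x v)
    (hmono : ∀ (t : ℝ) (x : EuclideanSpace ℝ (Fin n)),
      MonotoneOn (Y t x) (Set.Icc (0 : ℝ) 1))
    (hVI : ∀ t : ℝ, 0 ≤ t → ∀ Ytil : EuclideanSpace ℝ (Fin n) → ℝ → ℝ,
      (Continuous fun p : EuclideanSpace ℝ (Fin n) × ℝ => Ytil p.1 p.2) →
      (∀ x, MonotoneOn (Ytil x) (Set.Icc (0 : ℝ) 1)) →
      (∀ (i : Fin n) (x : EuclideanSpace ℝ (Fin n)) (v : ℝ),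
        Ytil (x + (2 * L) • EuclideanSpace.single i 1) v = Ytil x v) →
      0 ≤ ∫ p in S, (Ytil p.1 p.2 - Y t p.1 p.2) *
        (Yt t p.1 p.2 + ⟪f' p.2, Yx t p.1 p.2⟫)) :
    ∀ t : ℝ, 0 ≤ t →
      (∫ p in S, (Y t p.1 p.2) ^ 2) = ∫ p in S, (Y 0 p.1 p.2) ^ 2 := by
  -- basic continuity facts
  have hcY : ∀ s : ℝ, Continuous fun p : EuclideanSpace ℝ (Fin n) × ℝ => Y s p.1 p.2 :=
    fun s => hYc.comp (continuous_const.prodMk continuous_id)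
  have hcYt : ∀ s : ℝ, Continuous fun p : EuclideanSpace ℝ (Fin n) × ℝ => Yt s p.1 p.2 :=
    fun s => hYtc.comp (continuous_const.prodMk continuous_id)
  have hcYx : ∀ s : ℝ, Continuous fun p : EuclideanSpace ℝ (Fin n) × ℝ => Yx s p.1 p.2 :=
    fun s => hYxc.comp (continuous_const.prodMk continuous_id)
  have hcG : ∀ s : ℝ, Continuous fun p : EuclideanSpace ℝ (Fin n) × ℝ =>
      Yt s p.1 p.2 + ⟪f' p.2, Yx s p.1 p.2⟫ :=
    fun s => (hcYt s).add (Continuous.inner (hf'.comp continuous_snd) (hcYx s))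
  -- compactness of S
  have hBeq : {x : EuclideanSpace ℝ (Fin n) | ∀ i, x i ∈ Set.Icc (-L) L} =
      (PiLp.continuousLinearEquiv 2 ℝ (fun _ : Fin n => ℝ)) ⁻¹'
        (Set.Icc (fun _ => -L) (fun _ => L)) := by
    ext x
    simp [Set.mem_Icc, Pi.le_def, forall_and]
  have hBc : IsCompact {x : EuclideanSpace ℝ (Fin n) | ∀ i, x i ∈ Set.Icc (-L) L} := by
    rw [hBeq]
    exact (PiLp.continuousLinearEquiv 2 ℝ
      (fun _ : Fin n => ℝ)).toHomeomorph.isCompact_preimage.2 isCompact_Icc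
  have hSc : IsCompact S := by rw [hS]; exact hBc.prod isCompact_Icc
  have hSm : MeasurableSet S := hSc.isClosed.measurableSet
  have hSfin : volume S < ⊤ := hSc.measure_lt_top
  have hint : ∀ φ : EuclideanSpace ℝ (Fin n) × ℝ → ℝ, Continuous φ → IntegrableOn φ S :=
    fun φ hφ => hφ.continuousOn.integrableOn_compact hSc
  -- Step A : ∫ Y * (Yt + ⟪f', Yx⟫) = 0 for t ≥ 0
  have hZero : ∀ s : ℝ, 0 ≤ s →
      ∫ p in S, Y s p.1 p.2 * (Yt s p.1 p.2 + ⟪f' p.2, Yx s p.1 p.2⟫) = 0 := by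
    intro s hs
    have h2 := hVI s hs (fun x v => 2 * Y s x v)
      (continuous_const.mul (hcY s))
      (fun x a ha b hb hab => by
        dsimp only
        have := hmono s x ha hb hab
        linarith)
      (fun i x v => by rw [hper])
    have h0 := hVI s hs (fun _ _ => 0) continuous_const (fun x => monotoneOn_const)
      (fun i x v => rfl)
    rw [integral_congr_ae (Filter.Eventually.of_forall (fun p => by ring :
      ∀ p : EuclideanSpace ℝ (Fin n) × ℝ,
        ((fun (x : EuclideanSpace ℝ (Fin n)) (v : ℝ) => 2 * Y s x v) p.1 p.2 - Y s p.1 p.2) *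
          (Yt s p.1 p.2 + ⟪f' p.2, Yx s p.1 p.2⟫) =
        Y s p.1 p.2 * (Yt s p.1 p.2 + ⟪f' p.2, Yx s p.1 p.2⟫)))] at h2
    rw [integral_congr_ae (Filter.Eventually.of_forall (fun p => by ring :
      ∀ p : EuclideanSpace ℝ (Fin n) × ℝ,
        ((fun (_ : EuclideanSpace ℝ (Fin n)) (_ : ℝ) => (0:ℝ)) p.1 p.2 - Y s p.1 p.2) *
          (Yt s p.1 p.2 + ⟪f' p.2, Yx s p.1 p.2⟫) =
        -(Y s p.1 p.2 * (Yt s p.1 p.2 + ⟪f' p.2, Yx s p.1 p.2⟫)))), integral_neg] at h0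
    linarith
  -- Step B : ∫ Y * ⟪f', Yx⟫ = 0 for all s
  have hInner : ∀ s : ℝ,
      ∫ p in S, Y s p.1 p.2 * ⟪f' p.2, Yx s p.1 p.2⟫ = 0 := by
    intro s
    have hI : IntegrableOn (fun p : EuclideanSpace ℝ (Fin n) × ℝ =>
        Y s p.1 p.2 * ⟪f' p.2, Yx s p.1 p.2⟫) S :=
      hint _ ((hcY s).mul (Continuous.inner (hf'.comp continuous_snd) (hcYx s)))
    rw [hS] at hI ⊢
    rw [Measure.volume_eq_prod] at hI ⊢
    rw [setIntegral_prod_symm' _ hI]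
    have hv : ∀ v : ℝ,
        (∫ x in {x : EuclideanSpace ℝ (Fin n) | ∀ i, x i ∈ Set.Icc (-L) L},
          Y s x v * ⟪f' v, Yx s x v⟫) = 0 := by
      intro v
      exact box_integral_grad_zero hL (f' v) (fun x => Y s x v) (fun x => Yx s x v)
        (hYc.comp (Continuous.prodMk continuous_const
          ((Continuous.prodMk continuous_id continuous_const))))
        (hYxc.comp (Continuous.prodMk continuous_const
          ((Continuous.prodMk continuous_id continuous_const))))
        (fun x => hdx s x v) (fun i x => hper s i x v)
    rw [integral_congr_ae (Filter.Eventually.of_forall hv)]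
    simp
  -- Step C : ∫ Y * Yt = 0 for t ≥ 0
  have hYYt : ∀ s : ℝ, 0 ≤ s → ∫ p in S, Y s p.1 p.2 * Yt s p.1 p.2 = 0 := by
    intro s hs
    have hIa : IntegrableOn (fun p : EuclideanSpace ℝ (Fin n) × ℝ =>
        Y s p.1 p.2 * Yt s p.1 p.2) S := hint _ ((hcY s).mul (hcYt s))
    have hIb : IntegrableOn (fun p : EuclideanSpace ℝ (Fin n) × ℝ =>
        Y s p.1 p.2 * ⟪f' p.2, Yx s p.1 p.2⟫) S :=
      hint _ ((hcY s).mul (Continuous.inner (hf'.comp continuous_snd) (hcYx s)))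
    have hsplit : ∫ p in S, Y s p.1 p.2 * (Yt s p.1 p.2 + ⟪f' p.2, Yx s p.1 p.2⟫) =
        (∫ p in S, Y s p.1 p.2 * Yt s p.1 p.2) +
          ∫ p in S, Y s p.1 p.2 * ⟪f' p.2, Yx s p.1 p.2⟫ := by
      rw [← integral_add hIa hIb]
      exact integral_congr_ae (Filter.Eventually.of_forall (fun p => by ring))
    have := hZero s hs
    rw [hsplit, hInner s] at this
    linarith
  -- Step D : derivative of the squared norm
  have hN : ∀ s₀ : ℝ, HasDerivAt (fun s => ∫ p in S, (Y s p.1 p.2) ^ 2)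
      (∫ p in S, 2 * Y s₀ p.1 p.2 * Yt s₀ p.1 p.2) s₀ := by
    intro s₀
    -- bound on the derivative on a compact neighbourhood
    obtain ⟨C, hC⟩ := ((isCompact_Icc (a := s₀ - 1) (b := s₀ + 1)).prod hSc).exists_bound_of_continuousOn
      (Continuous.continuousOn (by
        have : Continuous fun q : ℝ × EuclideanSpace ℝ (Fin n) × ℝ =>
            2 * Y q.1 q.2.1 q.2.2 * Yt q.1 q.2.1 q.2.2 :=
          (continuous_const.mul hYc).mul hYtc
        exact this))
    refine (hasDerivAt_integral_of_dominated_loc_of_deriv_le (F := fun (s : ℝ) (p : EuclideanSpace ℝ (Fin n) × ℝ) => (Y s p.1 p.2)^2)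
      (F' := fun (s : ℝ) (p : EuclideanSpace ℝ (Fin n) × ℝ) => 2 * Y s p.1 p.2 * Yt s p.1 p.2) (bound := fun _ => C)
      (Metric.ball_mem_nhds s₀ one_pos) ?_ ?_ ?_ ?_ ?_ ?_).2
    · exact Filter.Eventually.of_forall fun s =>
        (((hcY s).pow 2).aestronglyMeasurable)
    · exact hint _ ((hcY s₀).pow 2)
    · exact ((continuous_const.mul (hcY s₀)).mul (hcYt s₀)).aestronglyMeasurable
    · refine (ae_restrict_mem hSm).mono fun p hp s hsball => ?_
      refine hC (s, p) ⟨?_, hp⟩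
      have := Metric.mem_ball.1 hsball
      rw [Real.dist_eq] at this
      constructor <;> [linarith [abs_le.1 this.le] ; linarith [(abs_le.1 this.le).2]]
    · exact integrableOn_const hSfin.ne
    · refine Filter.Eventually.of_forall fun p => fun s _ => ?_
      have h := (hdt s p.1 p.2).fun_pow 2
      simpa [pow_one, mul_comm, mul_assoc, mul_left_comm] using h
  -- Step E : conclude by the fundamental theorem of calculus
  intro t ht
  have hderiv : ∀ s ∈ Set.uIcc 0 t, HasDerivAt (fun s => ∫ p in S, (Y s p.1 p.2) ^ 2)
      ((fun _ => (0:ℝ)) s) s := by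
    intro s hsmem
    rw [Set.uIcc_of_le ht] at hsmem
    have h0 : ∫ p in S, 2 * Y s p.1 p.2 * Yt s p.1 p.2 = 0 := by
      have : ∫ p in S, 2 * Y s p.1 p.2 * Yt s p.1 p.2 =
          2 * ∫ p in S, Y s p.1 p.2 * Yt s p.1 p.2 := by
        rw [← integral_const_mul]
        exact integral_congr_ae (Filter.Eventually.of_forall fun p => by ring)
      rw [this, hYYt s hsmem.1]
      ring
    simpa [h0] using hN s
  have := intervalIntegral.integral_eq_sub_of_hasDerivAt hderiv
    (intervalIntegrable_const (c := (0:ℝ)))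
  simp only [intervalIntegral.integral_const, smul_zero, zero_smul, smul_eq_mul,
    mul_zero] at this
  linarith [this]
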